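/- Let A, B be positive definite n×n complex matrices and ν ∈ (0,1). Then for every nonnegative integer n₀, in the Loewner order, (1−ν)A + νB ≥ A♯_ν B + Σ_{k=0}^{n₀} r_k [ A♯_{m_k/2^k} B − 2 A♯_{(2m_k+1)/2^{k+1}} B + A♯_{(m_k+1)/2^k} B ]. -/

import Mathlib

open scoped ComplexOrder
open Matrix

/-- `r ν k`: the recursively defined coefficients, `r 0 = min {ν, 1-ν}`,
`r k = min {2 r (k-1), 1 - 2 r (k-1)}`. -/
noncomputable def r (ν : ℝ) : ℕ → ℝ
  | 0 => min ν (1 - ν)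
  | k + 1 => min (2 * r ν k) (1 - 2 * r ν k)

/-- `m ν k = ⌊2^k ν⌋`, as a real number. -/
noncomputable def m (ν : ℝ) (k : ℕ) : ℝ := ⌊2 ^ k * ν⌋

variable {d : ℕ}

/-- Real power of a matrix via the functional calculus: for a Hermitian matrix with spectral
decomposition `A = U diag(λᵢ) U*`, `mpow A t = U diag(λᵢ^t) U*` (real powers `Real.rpow` of the
eigenvalues); junk value `A` for non-Hermitian `A`. -/
noncomputable def mpow (A : Matrix (Fin d) (Fin d) ℂ) (t : ℝ) : Matrix (Fin d) (Fin d) ℂ :=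
  if hA : A.IsHermitian then
    (hA.eigenvectorUnitary : Matrix (Fin d) (Fin d) ℂ) *
      Matrix.diagonal (fun i => ((hA.eigenvalues i ^ t : ℝ) : ℂ)) *
      star (hA.eigenvectorUnitary : Matrix (Fin d) (Fin d) ℂ)
  else A

/-- The μ-weighted geometric mean `A♯_μ B = A^{1/2} (A^{-1/2} B A^{-1/2})^μ A^{1/2}`. -/
noncomputable def sharp (A B : Matrix (Fin d) (Fin d) ℂ) (μ : ℝ) : Matrix (Fin d) (Fin d) ℂ :=
  mpow A (1 / 2) * mpow (mpow A (-(1 / 2)) * B * mpow A (-(1 / 2))) μ * mpow A (1 / 2)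



lemma mpow_eq {A : Matrix (Fin d) (Fin d) ℂ} (hA : A.IsHermitian) (t : ℝ) :
    mpow A t = (hA.eigenvectorUnitary : Matrix (Fin d) (Fin d) ℂ) *
      Matrix.diagonal (fun i => ((hA.eigenvalues i ^ t : ℝ) : ℂ)) *
      star (hA.eigenvectorUnitary : Matrix (Fin d) (Fin d) ℂ) := by
  rw [mpow, dif_pos hA]

lemma diag_real_isHermitian (f : Fin d → ℝ) :
    (Matrix.diagonal (fun i => ((f i : ℝ) : ℂ))).IsHermitian :=
  Matrix.isHermitian_diagonal_of_self_adjoint _ <| by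
    funext i
    simp [Pi.star_apply, Complex.star_def, Complex.conj_ofReal]

lemma mpow_isHermitian {A : Matrix (Fin d) (Fin d) ℂ} (hA : A.IsHermitian) (t : ℝ) :
    (mpow A t).IsHermitian := by
  rw [mpow_eq hA t, Matrix.star_eq_conjTranspose (hA.eigenvectorUnitary : Matrix (Fin d) (Fin d) ℂ)]
  exact Matrix.isHermitian_mul_mul_conjTranspose _ (diag_real_isHermitian _)

lemma mpow_mul {A : Matrix (Fin d) (Fin d) ℂ} (hA : A.PosDef) (s t : ℝ) :
    mpow A s * mpow A t = mpow A (s + t) := by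
  have hAh := hA.1
  have hUU : star (hAh.eigenvectorUnitary : Matrix (Fin d) (Fin d) ℂ) *
      (hAh.eigenvectorUnitary : Matrix (Fin d) (Fin d) ℂ) = 1 :=
    Matrix.mem_unitaryGroup_iff'.mp (hAh.eigenvectorUnitary).2
  rw [mpow_eq hAh, mpow_eq hAh, mpow_eq hAh]
  simp only [Matrix.mul_assoc]
  rw [← Matrix.mul_assoc (star (hAh.eigenvectorUnitary : Matrix (Fin d) (Fin d) ℂ))
    (hAh.eigenvectorUnitary : Matrix (Fin d) (Fin d) ℂ), hUU, Matrix.one_mul,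
    ← Matrix.mul_assoc (Matrix.diagonal _) (Matrix.diagonal _), Matrix.diagonal_mul_diagonal]
  have hd : (Matrix.diagonal fun i => ((hAh.eigenvalues i ^ s : ℝ) : ℂ) * ((hAh.eigenvalues i ^ t : ℝ) : ℂ))
      = Matrix.diagonal fun i => ((hAh.eigenvalues i ^ (s + t) : ℝ) : ℂ) := by
    refine congrArg Matrix.diagonal ?_
    funext i
    rw [← Complex.ofReal_mul, ← Real.rpow_add (hA.eigenvalues_pos i)]
  rw [hd]

lemma mpow_zero {A : Matrix (Fin d) (Fin d) ℂ} (hA : A.IsHermitian) : mpow A 0 = 1 := by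
  rw [mpow_eq hA]
  have : (Matrix.diagonal (fun i => ((hA.eigenvalues i ^ (0:ℝ) : ℝ) : ℂ))) = 1 := by
    rw [← Matrix.diagonal_one]
    congr 1; funext i; simp [Real.rpow_zero]
  rw [this, Matrix.mul_one]
  exact Matrix.mem_unitaryGroup_iff.mp (hA.eigenvectorUnitary).2

lemma mpow_one {A : Matrix (Fin d) (Fin d) ℂ} (hA : A.IsHermitian) : mpow A 1 = A := by
  rw [mpow_eq hA]
  conv_rhs => rw [hA.spectral_theorem]
  have : (fun i => ((hA.eigenvalues i ^ (1:ℝ) : ℝ) : ℂ)) = RCLike.ofReal ∘ hA.eigenvalues := by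
    funext i
    simp only [Function.comp_apply, Real.rpow_one]
    rfl
  rw [this]
  rfl

/-- conjugation by `V` of real diagonal matrices, as an `ℝ`-linear map. -/
noncomputable def conjMap (V : Matrix (Fin d) (Fin d) ℂ) :
    (Fin d → ℝ) →ₗ[ℝ] Matrix (Fin d) (Fin d) ℂ where
  toFun f := V * Matrix.diagonal (fun i => ((f i : ℝ) : ℂ)) * star V
  map_add' f g := by
    have : (Matrix.diagonal fun i => (((f + g) i : ℝ) : ℂ))
        = Matrix.diagonal (fun i => ((f i : ℝ) : ℂ)) + Matrix.diagonal (fun i => ((g i : ℝ) : ℂ)) := by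
      rw [Matrix.diagonal_add]; congr 1; funext i; push_cast; simp
    rw [this, Matrix.mul_add, Matrix.add_mul]
  map_smul' c f := by
    have h1 : (fun i => (((c • f) i : ℝ) : ℂ)) = (c : ℂ) • (fun i => ((f i : ℝ) : ℂ)) := by
      funext i
      simp only [Pi.smul_apply, smul_eq_mul]
      push_cast
      ring
    rw [h1, Matrix.diagonal_smul, Matrix.mul_smul, Matrix.smul_mul]
    ext i j
    simp [Matrix.smul_apply, Complex.real_smul]

lemma conjMap_apply (V : Matrix (Fin d) (Fin d) ℂ) (f : Fin d → ℝ) :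
    conjMap V f = V * Matrix.diagonal (fun i => ((f i : ℝ) : ℂ)) * star V := rfl

lemma conjMap_posSemidef (V : Matrix (Fin d) (Fin d) ℂ) (g : Fin d → ℝ) (hg : ∀ i, 0 ≤ g i) :
    (conjMap V g).PosSemidef := by
  rw [conjMap_apply, Matrix.star_eq_conjTranspose]
  exact (Matrix.posSemidef_diagonal_iff.mpr
    (fun i => Complex.zero_le_real.mpr (hg i))).mul_mul_conjTranspose_same V


section ScalarLemmas


lemma r_bounds {ν : ℝ} (hν : ν ∈ Set.Icc (0:ℝ) 1) (k : ℕ) : 0 ≤ r ν k ∧ r ν k ≤ 1/2 := by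
  induction k with
  | zero =>
    obtain ⟨h0, h1⟩ := hν
    constructor
    · simp [r]; constructor <;> linarith
    · rcases le_total ν (1/2) with h | h
      · calc min ν (1-ν) ≤ ν := min_le_left _ _
          _ ≤ 1/2 := h
      · calc min ν (1-ν) ≤ 1-ν := min_le_right _ _
          _ ≤ 1/2 := by linarith
  | succ k ih =>
    obtain ⟨h0, h1⟩ := ih
    constructor
    · simp only [r, le_min_iff]; constructor <;> linarith
    · rcases le_total (2 * r ν k) (1/2) with h | h
      · calc min (2 * r ν k) (1 - 2 * r ν k) ≤ 2 * r ν k := min_le_left _ _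
          _ ≤ 1/2 := h
      · calc min (2 * r ν k) (1 - 2 * r ν k) ≤ 1 - 2 * r ν k := min_le_right _ _
          _ ≤ 1/2 := by linarith

lemma r_succ_left {ν : ℝ} (h0 : 0 ≤ ν) (h : ν ≤ 1/2) (k : ℕ) : r ν (k+1) = r (2*ν) k := by
  induction k with
  | zero => simp [r, min_eq_left (by linarith : ν ≤ 1 - ν)]
  | succ k ih => rw [show r ν (k+2) = min (2 * r ν (k+1)) (1 - 2 * r ν (k+1)) from rfl, ih]; rfl

lemma r_succ_right {ν : ℝ} (h : 1/2 ≤ ν) (h1 : ν ≤ 1) (k : ℕ) : r ν (k+1) = r (2*ν-1) k := by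
  induction k with
  | zero =>
    simp only [r, min_eq_right (by linarith : 1 - ν ≤ ν)]
    rw [min_comm]; ring_nf
  | succ k ih => rw [show r ν (k+2) = min (2 * r ν (k+1)) (1 - 2 * r ν (k+1)) from rfl, ih]; rfl

lemma m_succ_left (ν : ℝ) (k : ℕ) : m ν (k+1) = m (2*ν) k := by
  unfold m; norm_num; ring_nf

lemma m_succ_right (ν : ℝ) (k : ℕ) : m ν (k+1) = m (2*ν-1) k + 2^k := by
  unfold m
  have : (2:ℝ) ^ (k+1) * ν = 2^k * (2*ν-1) + (2^k : ℤ) := by push_cast; ring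
  rw [this, Int.floor_add_intCast]
  push_cast; ring

lemma scalar_key : ∀ (n : ℕ) (ν : ℝ), ν ∈ Set.Icc (0:ℝ) 1 → ∀ x : ℝ, 0 < x →
    ∑ k ∈ Finset.range n, r ν k *
      (x ^ ((m ν k + 1) / 2 ^ (k+1)) - x ^ (m ν k / 2 ^ (k+1)))^2
      ≤ 1 - ν + ν * x - x ^ ν := by
  intro n
  induction n with
  | zero =>
    intro ν hν x hx
    simp only [Finset.range_zero, Finset.sum_empty]
    have := Real.geom_mean_le_arith_mean2_weighted (by linarith [hν.2] : (0:ℝ) ≤ 1 - ν)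
      hν.1 zero_le_one hx.le (by ring)
    rw [Real.one_rpow] at this
    linarith
  | succ n ih =>
    intro ν hν x hx
    obtain ⟨h0, h1⟩ := hν
    rcases eq_or_lt_of_le h1 with rfl | h1
    · -- ν = 1 : everything vanishes
      have hr : ∀ k, r 1 k = 0 := by
        intro k; induction k with
        | zero => simp [r]
        | succ k ih => simp [r, ih]
      simp [hr, Real.rpow_one]
    have hy : (0:ℝ) < x ^ ((1:ℝ)/2) := Real.rpow_pos_of_pos hx _
    set y := x ^ ((1:ℝ)/2) with hydef
    have hy2 : y ^ 2 = x := by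
      rw [hydef, ← Real.rpow_natCast (x ^ ((1:ℝ)/2)) 2, ← Real.rpow_mul hx.le]
      norm_num
    have hm0 : m ν 0 = 0 := by
      unfold m; norm_num
      exact ⟨h0, h1⟩
    have hpow : ∀ (a : ℝ) (k : ℕ), x ^ (a / 2 ^ (k+2)) = y ^ (a / 2 ^ (k+1)) := by
      intro a k
      rw [hydef, ← Real.rpow_mul hx.le]
      congr 1
      rw [show ((2:ℝ)^(k+2)) = 2^(k+1)*2 by rw [pow_succ], div_mul_eq_div_div]
      ring
    rw [Finset.sum_range_succ']
    have hterm0 : r ν 0 * (x ^ ((m ν 0 + 1) / 2 ^ (0+1)) - x ^ (m ν 0 / 2 ^ (0+1)))^2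
        = r ν 0 * (y - 1)^2 := by
      rw [hm0]; norm_num; left; rfl
    rw [hterm0]
    rcases le_total ν (1/2) with hc | hc
    · -- left case
      have hr0 : r ν 0 = ν := min_eq_left (by linarith)
      have hsum : ∑ k ∈ Finset.range n, r ν (k+1) *
          (x ^ ((m ν (k+1) + 1) / 2 ^ (k+1+1)) - x ^ (m ν (k+1) / 2 ^ (k+1+1)))^2
          = ∑ k ∈ Finset.range n, r (2*ν) k *
          (y ^ ((m (2*ν) k + 1) / 2 ^ (k+1)) - y ^ (m (2*ν) k / 2 ^ (k+1)))^2 := by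
        apply Finset.sum_congr rfl
        intro k _
        rw [r_succ_left h0 hc, m_succ_left, hpow, hpow]
      rw [hsum, hr0]
      have hIH := ih (2*ν) ⟨by linarith, by linarith⟩ y hy
      have hyν : y ^ (2*ν) = x ^ ν := by
        rw [hydef, ← Real.rpow_mul hx.le]; congr 1; ring
      nlinarith [hIH, hy2, hyν, sq_nonneg (y-1)]
    · -- right case
      have hr0 : r ν 0 = 1 - ν := min_eq_right (by linarith)
      have hx4 : x ^ ((1:ℝ)/4) > 0 := Real.rpow_pos_of_pos hx _
      have hsum : ∑ k ∈ Finset.range n, r ν (k+1) *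
          (x ^ ((m ν (k+1) + 1) / 2 ^ (k+1+1)) - x ^ (m ν (k+1) / 2 ^ (k+1+1)))^2
          = y * ∑ k ∈ Finset.range n, r (2*ν-1) k *
          (y ^ ((m (2*ν-1) k + 1) / 2 ^ (k+1)) - y ^ (m (2*ν-1) k / 2 ^ (k+1)))^2 := by
        rw [Finset.mul_sum]
        apply Finset.sum_congr rfl
        intro k _
        rw [r_succ_right hc h1.le, m_succ_right]
        have e1 : (m (2*ν-1) k + 2^k + 1) / 2 ^ (k+1+1) = (m (2*ν-1) k + 1) / 2^(k+2) + 1/4 := by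
          rw [div_add_div _ _ (by positivity : ((2:ℝ)^(k+2)) ≠ 0) (by norm_num : (4:ℝ) ≠ 0)]
          rw [div_eq_div_iff (by positivity) (by positivity)]
          push_cast; ring
        have e2 : (m (2*ν-1) k + 2^k) / 2 ^ (k+1+1) = m (2*ν-1) k / 2^(k+2) + 1/4 := by
          rw [div_add_div _ _ (by positivity : ((2:ℝ)^(k+2)) ≠ 0) (by norm_num : (4:ℝ) ≠ 0)]
          rw [div_eq_div_iff (by positivity) (by positivity)]
          push_cast; ring
        rw [e1, e2, Real.rpow_add hx, Real.rpow_add hx, hpow, hpow]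
        have hy14 : x ^ ((1:ℝ)/4) * x ^ ((1:ℝ)/4) = y := by
          rw [← Real.rpow_add hx, hydef]; norm_num
        linear_combination (r (2*ν-1) k *
          (y ^ ((m (2*ν-1) k + 1) / 2 ^ (k+1)) - y ^ (m (2*ν-1) k / 2 ^ (k+1)))^2) * hy14
      rw [hsum, hr0]
      have hIH := ih (2*ν-1) ⟨by linarith, by linarith⟩ y hy
      have hyν : y ^ (2*ν-1) * y = x ^ ν := by
        nth_rewrite 2 [hydef]
        rw [hydef, ← Real.rpow_mul hx.le, ← Real.rpow_add hx]
        congr 1; ring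
      have hsumnn : 0 ≤ ∑ k ∈ Finset.range n, r (2*ν-1) k *
          (y ^ ((m (2*ν-1) k + 1) / 2 ^ (k+1)) - y ^ (m (2*ν-1) k / 2 ^ (k+1)))^2 := by
        apply Finset.sum_nonneg
        intro k _
        exact mul_nonneg (r_bounds ⟨by linarith, by linarith⟩ k).1 (sq_nonneg _)
      nlinarith [hy2, hyν, mul_le_mul_of_nonneg_left hIH hy.le, sq_nonneg (y-1)]

end ScalarLemmas

theorem stmt10 (A B : Matrix (Fin d) (Fin d) ℂ) (hA : A.PosDef) (hB : B.PosDef)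
    (ν : ℝ) (hν : ν ∈ Set.Ioo (0 : ℝ) 1) (n₀ : ℕ) :
    ((1 - ν) • A + ν • B -
      (sharp A B ν + ∑ k ∈ Finset.range (n₀ + 1), r ν k •
        (sharp A B (m ν k / 2 ^ k) - (2 : ℝ) • sharp A B ((2 * m ν k + 1) / 2 ^ (k + 1)) +
          sharp A B ((m ν k + 1) / 2 ^ k)))).PosSemidef := by
  obtain ⟨hν0, hν1⟩ := hν
  have hAh := hA.1
  set S := mpow A (1/2) with hSdef
  set C := mpow A (-(1/2)) with hCdef
  have hS : S.IsHermitian := mpow_isHermitian hAh _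
  have hC : C.IsHermitian := mpow_isHermitian hAh _
  have hSC : S * C = (1 : Matrix (Fin d) (Fin d) ℂ) := by
    rw [hSdef, hCdef, mpow_mul hA]; norm_num; exact mpow_zero hAh
  have hCS : C * S = (1 : Matrix (Fin d) (Fin d) ℂ) := by
    rw [hSdef, hCdef, mpow_mul hA]; norm_num; exact mpow_zero hAh
  have hSS : S * S = A := by
    rw [hSdef, mpow_mul hA]; norm_num; exact mpow_one hAh
  set X := C * B * C with hXdef
  have hXpd : X.PosDef := by
    rw [Matrix.posDef_iff_dotProduct_mulVec]
    constructor
    · rw [hXdef]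
      nth_rewrite 2 [← hC.eq]
      exact Matrix.isHermitian_mul_mul_conjTranspose C hB.1
    · intro x hx
      have hz : C *ᵥ x ≠ 0 := by
        intro h
        apply hx
        have h2 : (S * C) *ᵥ x = x := by rw [hSC, Matrix.one_mulVec]
        rw [← h2, ← Matrix.mulVec_mulVec, h, Matrix.mulVec_zero]
      have h1 : star x ⬝ᵥ (X *ᵥ x) = star (C *ᵥ x) ⬝ᵥ (B *ᵥ (C *ᵥ x)) := by
        rw [hXdef, ← Matrix.mulVec_mulVec, ← Matrix.mulVec_mulVec,
          Matrix.dotProduct_mulVec (star x) C, Matrix.star_mulVec, hC.eq]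
      rw [h1]
      exact hB.dotProduct_mulVec_pos hz
  have hXh : X.IsHermitian := hXpd.1
  set U : Matrix (Fin d) (Fin d) ℂ := (hXh.eigenvectorUnitary : Matrix (Fin d) (Fin d) ℂ) with hUdef
  set lam := hXh.eigenvalues with hlamdef
  have hlam : ∀ i, 0 < lam i := fun i => hXpd.eigenvalues_pos i
  have hU1 : U * star U = 1 := Matrix.mem_unitaryGroup_iff.mp (hXh.eigenvectorUnitary).2
  set V := S * U with hVdef
  have hstarV : star V = star U * S := by
    rw [hVdef, StarMul.star_mul, Matrix.star_eq_conjTranspose S, hS.eq]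
  have sharp_eq : ∀ t : ℝ, sharp A B t = conjMap V (fun i => lam i ^ t) := by
    intro t
    rw [show sharp A B t = S * mpow X t * S from by rw [hXdef, hSdef, hCdef]; rfl]
    rw [conjMap_apply, mpow_eq hXh, hstarV, hVdef]
    simp only [Matrix.mul_assoc]
    rfl
  have A_eq : A = conjMap V (fun _ => (1:ℝ)) := by
    rw [conjMap_apply, hstarV, hVdef]
    have hD : Matrix.diagonal (fun _ : Fin d => (((1:ℝ)):ℂ)) = 1 := by
      rw [← Matrix.diagonal_one]
      refine congrArg Matrix.diagonal ?_
      funext i; simp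
    rw [hD, Matrix.mul_one]
    calc A = S * S := hSS.symm
      _ = S * (U * star U) * S := by rw [hU1, Matrix.mul_one]
      _ = S * U * (star U * S) := by simp only [Matrix.mul_assoc]
  have B_eq : B = conjMap V lam := by
    rw [conjMap_apply, hstarV, hVdef]
    have hfun : (fun i => ((lam i : ℝ) : ℂ)) = RCLike.ofReal ∘ lam := by funext i; rfl
    calc B = (S * C) * B * (C * S) := by rw [hSC, hCS, Matrix.one_mul, Matrix.mul_one]
      _ = S * X * S := by rw [hXdef]; simp only [Matrix.mul_assoc]
      _ = S * (U * Matrix.diagonal (RCLike.ofReal ∘ lam) * star U) * S := by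
          exact congrArg (fun Y => S * Y * S) hXh.spectral_theorem
      _ = S * U * Matrix.diagonal (fun i => ((lam i : ℝ) : ℂ)) * (star U * S) := by
          rw [hfun]; simp only [Matrix.mul_assoc]
  simp only [sharp_eq]
  rw [A_eq, B_eq]
  simp only [← _root_.map_smul, ← _root_.map_sub, ← _root_.map_add, ← _root_.map_sum]
  apply conjMap_posSemidef
  intro i
  simp only [Pi.add_apply, Pi.sub_apply, Pi.smul_apply, Finset.sum_apply, smul_eq_mul, mul_one]
  have hx : 0 < lam i := hlam i
  have hsq : ∀ k : ℕ, lam i ^ (m ν k / 2^k) - 2 * lam i ^ ((2 * m ν k + 1) / 2^(k+1))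
      + lam i ^ ((m ν k + 1) / 2^k)
      = (lam i ^ ((m ν k + 1) / 2^(k+1)) - lam i ^ (m ν k / 2^(k+1)))^2 := by
    intro k
    have e1 : m ν k / 2^k = m ν k / 2^(k+1) + m ν k / 2^(k+1) := by
      rw [pow_succ]; field_simp; ring
    have e2 : (2 * m ν k + 1) / 2^(k+1) = (m ν k + 1) / 2^(k+1) + m ν k / 2^(k+1) := by
      ring
    have e3 : (m ν k + 1) / 2^k = (m ν k + 1)/2^(k+1) + (m ν k + 1)/2^(k+1) := by
      rw [pow_succ]; field_simp; ring
    rw [e1, e2, e3, Real.rpow_add hx, Real.rpow_add hx, Real.rpow_add hx]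
    ring
  simp only [hsq]
  have hkey := scalar_key (n₀+1) ν ⟨hν0.le, hν1.le⟩ (lam i) hx
  linarith
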